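/- Fix n ≥ 1 and X ⊆ ℕ², and assume (n+1, i) ∈ X and (i, n+1) ∉ X for every i ∈ [n]. Let I = {i₁ < ⋯ < i_ℓ} ⊆ [n], define I' = {i_k ∈ I : i_k − 1 ∉ I} and I'' = I' \ {1}, and for each k ∈ [ℓ] set I_k = {i₁,…,i_{k−1}, i_k − 1, i_{k+1} − 1, …, i_ℓ − 1} \ {0} and Î_k = {i₁,…,i_{k−1}, i_{k+1} − 1, …, i_ℓ − 1} \ {0}. Then d_X(I; n+1) = d_X(I; n) + Σ_{i_k ∈ I''} d_X(I_k; n) + Σ_{i_k ∈ I'} d_X(Î_k; n). -/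

import Mathlib

open Classical in
/-- The `X`-descent set of a word `w = w₁⋯w_n` (stored 0-indexed as a list), as a subset of
`[n-1] = {1, …, n-1}`: position `i` is an `X`-descent iff `(w_i, w_{i+1}) ∈ X`. -/
noncomputable def XDes (X : Set (ℕ × ℕ)) (w : List ℕ) : Finset ℕ :=
  (Finset.Icc 1 (w.length - 1)).filter (fun i => (w.getD (i - 1) 0, w.getD i 0) ∈ X)

/-- `dX X I S` is the number of permutations of the finite label set `S ⊆ ℕ` (written in
one-line notation as duplicate-free lists using exactly the labels of `S`) whose
`X`-descent set is exactly `I`. -/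
noncomputable def dX (X : Set (ℕ × ℕ)) (I : Finset ℕ) (S : Finset ℕ) : ℕ :=
  Nat.card {w : List ℕ // w.Nodup ∧ w.toFinset = S ∧ XDes X w = I}

/-- `dXn X I n = dX X I [n]` where `[n] = {1, …, n}`. -/
noncomputable def dXn (X : Set (ℕ × ℕ)) (I : Finset ℕ) (n : ℕ) : ℕ :=
  dX X I (Finset.Icc 1 n)

/-- For `I = {i₁ < ⋯ < i_ℓ}` and `m = i_k ∈ I`, the set
`I_k = {i₁,…,i_{k−1}, i_k − 1, i_{k+1} − 1, …, i_ℓ − 1} \ {0}`: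
elements below `m` are kept, elements `≥ m` are decreased by one, and `0` is removed. -/
def shiftFrom (I : Finset ℕ) (m : ℕ) : Finset ℕ :=
  ((I.filter (· < m)) ∪ ((I.filter (fun i => m ≤ i)).image (· - 1))).erase 0

/-- For `I = {i₁ < ⋯ < i_ℓ}` and `m = i_k ∈ I`, the set
`Î_k = {i₁,…,i_{k−1}, i_{k+1} − 1, …, i_ℓ − 1} \ {0}`:
elements below `m` are kept, `m` is dropped, elements `> m` are decreased by one,
and `0` is removed. -/
def shiftDrop (I : Finset ℕ) (m : ℕ) : Finset ℕ :=
  ((I.filter (· < m)) ∪ ((I.filter (fun i => m < i)).image (· - 1))).erase 0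

namespace Stmt4Aux

/-- insertion of `x` at (0-based) position `q`. -/
def ins (q x : ℕ) (w : List ℕ) : List ℕ := w.take q ++ x :: w.drop q

lemma perm_ins (q x : ℕ) (w : List ℕ) : (ins q x w).Perm (x :: w) := by
  refine List.perm_middle.trans ?_
  rw [List.take_append_drop]

lemma length_ins (q x : ℕ) (w : List ℕ) (hq : q ≤ w.length) :
    (ins q x w).length = w.length + 1 := by
  simpa using (perm_ins q x w).length_eq

lemma nodup_ins (q x : ℕ) (w : List ℕ) :
    (ins q x w).Nodup ↔ x ∉ w ∧ w.Nodup := by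
  rw [(perm_ins q x w).nodup_iff, List.nodup_cons]

lemma toFinset_ins (q x : ℕ) (w : List ℕ) :
    (ins q x w).toFinset = insert x w.toFinset := by
  rw [List.toFinset_eq_of_perm _ _ (perm_ins q x w), List.toFinset_cons]

lemma length_take_eq (q : ℕ) (w : List ℕ) (hq : q ≤ w.length) : (w.take q).length = q := by
  simp; omega

lemma getD_ins_lt (q x i : ℕ) (w : List ℕ) (hq : q ≤ w.length) (h : i < q) :
    (ins q x w).getD i 0 = w.getD i 0 := by
  rw [List.getD_eq_getElem?_getD, List.getD_eq_getElem?_getD, ins,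
    List.getElem?_append_left (by rw [length_take_eq q w hq]; exact h),
    List.getElem?_take]
  simp [h]

lemma getD_ins_self (q x : ℕ) (w : List ℕ) (hq : q ≤ w.length) :
    (ins q x w).getD q 0 = x := by
  rw [List.getD_eq_getElem?_getD, ins,
    List.getElem?_append_right (by rw [length_take_eq q w hq])]
  simp [length_take_eq q w hq]

lemma getD_ins_gt (q x i : ℕ) (w : List ℕ) (hq : q ≤ w.length) (h : q < i) :
    (ins q x w).getD i 0 = w.getD (i - 1) 0 := by
  rw [List.getD_eq_getElem?_getD, List.getD_eq_getElem?_getD, ins,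
    List.getElem?_append_right (by rw [length_take_eq q w hq]; omega)]
  rw [length_take_eq q w hq]
  have : i - q = (i - q - 1) + 1 := by omega
  rw [this, List.getElem?_cons_succ, List.getElem?_drop,
    show q + (i - q - 1) = i - 1 from by omega]

lemma indexOf_ins (q x : ℕ) (w : List ℕ) (hq : q ≤ w.length) (hx : x ∉ w) :
    (ins q x w).idxOf x = q := by
  rw [ins, List.idxOf_append_of_notMem (fun h => hx (List.take_subset q w h)),
    List.idxOf_cons_self, length_take_eq q w hq]
  omega

lemma eraseIdx_ins (q x : ℕ) (w : List ℕ) (hq : q ≤ w.length) :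
    (ins q x w).eraseIdx q = w := by
  rw [List.eraseIdx_eq_take_drop_succ, ins,
    List.take_left' (length_take_eq q w hq)]
  have : (w.take q ++ x :: w.drop q).drop (q + 1) = w.drop q := by
    rw [show q + 1 = (w.take q ++ [x]).length by simp [length_take_eq q w hq],
      show w.take q ++ x :: w.drop q = (w.take q ++ [x]) ++ w.drop q by simp,
      List.drop_left]
  rw [this, List.take_append_drop]

lemma ins_eraseIdx (x : ℕ) (v : List ℕ) (hv : x ∈ v) :
    ins (v.idxOf x) x (v.eraseIdx (v.idxOf x)) = v := by
  set q := v.idxOf x with hqdef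
  have hq : q < v.length := List.idxOf_lt_length_iff.2 hv
  have hget : v[q] = x := List.getElem_idxOf hq
  rw [List.eraseIdx_eq_take_drop_succ, ins,
    List.take_left' (length_take_eq q v hq.le),
    List.drop_left' (length_take_eq q v hq.le), ← hget,
    List.getElem_cons_drop, List.take_append_drop]

lemma mem_XDes {X : Set (ℕ × ℕ)} {w : List ℕ} {i : ℕ} :
    i ∈ XDes X w ↔ (1 ≤ i ∧ i ≤ w.length - 1) ∧ (w.getD (i - 1) 0, w.getD i 0) ∈ X := by
  classical
  unfold XDes
  rw [Finset.mem_filter, Finset.mem_Icc]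

variable {X : Set (ℕ × ℕ)} {n : ℕ}

/-- Membership description of the descent set after insertion of `n+1`. -/
lemma mem_XDes_ins (hX : ∀ i ∈ Finset.Icc 1 n, (n + 1, i) ∈ X ∧ (i, n + 1) ∉ X)
    {w : List ℕ} (hlen : w.length = n) (hw : ∀ a ∈ w, 1 ≤ a ∧ a ≤ n)
    {q : ℕ} (hq : q ≤ n) (i : ℕ) :
    i ∈ XDes X (ins q (n + 1) w) ↔
      (i < q ∧ i ∈ XDes X w) ∨ (q < n ∧ i = q + 1) ∨ (q + 2 ≤ i ∧ i - 1 ∈ XDes X w) := by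
  have hq' : q ≤ w.length := by omega
  have hlen' : (ins q (n + 1) w).length = n + 1 := by rw [length_ins _ _ _ hq', hlen]
  have hmemD : ∀ j, j < n → w.getD j 0 ∈ Finset.Icc 1 n := by
    intro j hj
    have h1 : w.getD j 0 ∈ w := by
      rw [List.getD_eq_getElem _ _ (by omega)]
      exact List.getElem_mem _
    exact Finset.mem_Icc.2 (hw _ h1)
  rw [mem_XDes, hlen']
  simp only [Nat.add_sub_cancel]
  simp only [mem_XDes]
  rcases Nat.lt_trichotomy i q with hiq | hiq | hiq
  · -- i < q
    rw [getD_ins_lt _ _ _ _ hq' (by omega), getD_ins_lt _ _ _ _ hq' hiq]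
    constructor
    · rintro ⟨⟨h1, _⟩, h3⟩
      exact Or.inl ⟨hiq, ⟨h1, by omega⟩, h3⟩
    · rintro (⟨_, ⟨⟨h1, h2⟩, h3⟩⟩ | ⟨_, h2⟩ | ⟨h1, _⟩) 
      · exact ⟨⟨h1, by omega⟩, h3⟩
      · omega
      · omega
  · -- i = q : no descent here
    subst hiq
    constructor
    · rintro ⟨⟨h1, _⟩, h3⟩
      exfalso
      rw [getD_ins_self _ _ _ hq'] at h3
      rw [getD_ins_lt _ _ _ _ hq' (by omega)] at h3
      exact (hX _ (hmemD (i - 1) (by omega))).2 h3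
    · rintro (⟨h, _⟩ | ⟨h1, h2⟩ | ⟨h, _⟩) <;> omega
  · -- q < i
    rcases Nat.eq_or_lt_of_le hiq with hiq1 | hiq2
    · -- i = q + 1
      have hiq1' : i = q + 1 := hiq1.symm
      subst hiq1'
      rw [show q + 1 - 1 = q from by omega, getD_ins_self _ _ _ hq',
        getD_ins_gt _ _ _ _ hq' (by omega), show q + 1 - 1 = q from by omega]
      constructor
      · rintro ⟨⟨_, h2⟩, _⟩
        exact Or.inr (Or.inl ⟨by omega, rfl⟩)
      · rintro (⟨h, _⟩ | ⟨h, _⟩ | ⟨h, _⟩)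
        · omega
        · exact ⟨⟨by omega, by omega⟩, (hX _ (hmemD q (by omega))).1⟩
        · omega
    · -- q + 2 ≤ i
      rw [getD_ins_gt _ _ _ _ hq' (by omega), getD_ins_gt _ _ _ _ hq' (by omega)]
      constructor
      · rintro ⟨⟨_, h2⟩, h3⟩
        refine Or.inr (Or.inr ⟨by omega, ⟨by omega, by omega⟩, ?_⟩)
        rw [show i - 1 - 1 = i - 2 from by omega]
        exact h3
      · rintro (⟨h1, _⟩ | ⟨_, h2⟩ | ⟨h1, ⟨⟨_, h2⟩, h3⟩⟩)
        · omega
        · omega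
        · refine ⟨⟨by omega, by omega⟩, ?_⟩
          rw [show i - 1 - 1 = i - 2 from by omega] at h3
          exact h3

lemma mem_shiftDrop {I : Finset ℕ} {m i : ℕ} :
    i ∈ shiftDrop I m ↔ i ≠ 0 ∧ ((i ∈ I ∧ i < m) ∨ (i + 1 ∈ I ∧ m < i + 1)) := by
  unfold shiftDrop
  rw [Finset.mem_erase, Finset.mem_union, Finset.mem_image]
  simp only [Finset.mem_filter]
  constructor
  · rintro ⟨h0, ⟨h1, h2⟩ | ⟨j, ⟨hj1, hj2⟩, hj3⟩⟩
    · exact ⟨h0, Or.inl ⟨h1, h2⟩⟩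
    · refine ⟨h0, Or.inr ⟨?_, by omega⟩⟩
      rw [show i + 1 = j from by omega]
      exact hj1
  · rintro ⟨h0, ⟨h1, h2⟩ | ⟨h1, h2⟩⟩
    · exact ⟨h0, Or.inl ⟨h1, h2⟩⟩
    · exact ⟨h0, Or.inr ⟨i + 1, ⟨h1, by omega⟩, by omega⟩⟩

lemma mem_shiftFrom {I : Finset ℕ} {m i : ℕ} :
    i ∈ shiftFrom I m ↔ i ≠ 0 ∧ ((i ∈ I ∧ i < m) ∨ (i + 1 ∈ I ∧ m ≤ i + 1)) := by
  unfold shiftFrom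
  rw [Finset.mem_erase, Finset.mem_union, Finset.mem_image]
  simp only [Finset.mem_filter]
  constructor
  · rintro ⟨h0, ⟨h1, h2⟩ | ⟨j, ⟨hj1, hj2⟩, hj3⟩⟩
    · exact ⟨h0, Or.inl ⟨h1, h2⟩⟩
    · refine ⟨h0, Or.inr ⟨?_, by omega⟩⟩
      rw [show i + 1 = j from by omega]
      exact hj1
  · rintro ⟨h0, ⟨h1, h2⟩ | ⟨h1, h2⟩⟩
    · exact ⟨h0, Or.inl ⟨h1, h2⟩⟩
    · exact ⟨h0, Or.inr ⟨i + 1, ⟨h1, by omega⟩, by omega⟩⟩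

/-- The key combinatorial characterization, for insertion position `q < n`. -/
lemma key_iff {n q : ℕ} {S I : Finset ℕ} (hq : q < n)
    (hS : ∀ i ∈ S, 1 ≤ i ∧ i + 1 ≤ n) (hI : ∀ i ∈ I, 1 ≤ i ∧ i ≤ n)
    (h : ∀ i : ℕ, ((i < q ∧ i ∈ S) ∨ (q < n ∧ i = q + 1) ∨ (q + 2 ≤ i ∧ i - 1 ∈ S)) ↔ i ∈ I) :
    q + 1 ∈ I ∧ q ∉ I ∧
      (S = shiftDrop I (q + 1) ∨ (1 ≤ q ∧ S = shiftFrom I (q + 1))) := by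
  have hq1 : q + 1 ∈ I := (h (q + 1)).1 (Or.inr (Or.inl ⟨hq, rfl⟩))
  have hqI : q ∉ I := by
    intro hmem
    rcases (h q).2 hmem with ⟨h1, _⟩ | ⟨_, h2⟩ | ⟨h3, _⟩ <;> omega
  have hlow : ∀ i, i < q → (i ∈ S ↔ i ∈ I) := by
    intro i hi
    constructor
    · intro hiS; exact (h i).1 (Or.inl ⟨hi, hiS⟩)
    · intro hiI
      rcases (h i).2 hiI with ⟨_, h'⟩ | ⟨_, h2⟩ | ⟨h3, _⟩
      · exact h'
      · omega
      · omega
  have hhigh : ∀ i, q < i → (i ∈ S ↔ i + 1 ∈ I) := by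
    intro i hi
    constructor
    · intro hiS
      exact (h (i + 1)).1 (Or.inr (Or.inr ⟨by omega, by simpa using hiS⟩))
    · intro hiI
      rcases (h (i + 1)).2 hiI with ⟨h1, _⟩ | ⟨_, h2⟩ | ⟨h3, h4⟩
      · omega
      · omega
      · simpa using h4
  refine ⟨hq1, hqI, ?_⟩
  by_cases hqS : q ∈ S
  · right
    have hq0 : 1 ≤ q := (hS q hqS).1
    refine ⟨hq0, ?_⟩
    ext i
    rw [mem_shiftFrom]
    rcases Nat.lt_trichotomy i q with hlt | heq | hgt
    · rw [hlow i hlt]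
      constructor
      · intro hi
        exact ⟨by have := hI i hi; omega, Or.inl ⟨hi, by omega⟩⟩
      · rintro ⟨h0, ⟨h1, _⟩ | ⟨_, h2⟩⟩
        · exact h1
        · omega
    · subst heq
      constructor
      · intro _
        exact ⟨by omega, Or.inr ⟨by simpa using hq1, by omega⟩⟩
      · intro _
        exact hqS
    · rw [hhigh i hgt]
      constructor
      · intro hi
        exact ⟨by omega, Or.inr ⟨hi, by omega⟩⟩
      · rintro ⟨h0, ⟨_, h1⟩ | ⟨h1, _⟩⟩
        · omega
        · exact h1
  · left
    ext i
    rw [mem_shiftDrop]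
    rcases Nat.lt_trichotomy i q with hlt | heq | hgt
    · rw [hlow i hlt]
      constructor
      · intro hi
        exact ⟨by have := hI i hi; omega, Or.inl ⟨hi, by omega⟩⟩
      · rintro ⟨h0, ⟨h1, _⟩ | ⟨_, h2⟩⟩
        · exact h1
        · omega
    · subst heq
      constructor
      · intro hi
        exact absurd hi hqS
      · rintro ⟨h0, ⟨h1, h2⟩ | ⟨h1, h2⟩⟩
        · exact absurd h1 hqI
        · omega
    · rw [hhigh i hgt]
      constructor
      · intro hi
        exact ⟨by omega, Or.inr ⟨hi, by omega⟩⟩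
      · rintro ⟨h0, ⟨_, h1⟩ | ⟨h1, _⟩⟩
        · omega
        · exact h1

/-- Converse: `shiftDrop` case. -/
lemma key_drop {n q : ℕ} {S I : Finset ℕ} (hq : q < n)
    (hI : ∀ i ∈ I, 1 ≤ i ∧ i ≤ n) (hq1 : q + 1 ∈ I) (hqI : q ∉ I)
    (hSeq : S = shiftDrop I (q + 1)) :
    ∀ i : ℕ, ((i < q ∧ i ∈ S) ∨ (q < n ∧ i = q + 1) ∨ (q + 2 ≤ i ∧ i - 1 ∈ S)) ↔ i ∈ I := by
  subst hSeq
  intro i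
  constructor
  · rintro (⟨h1, h2⟩ | ⟨_, rfl⟩ | ⟨h1, h2⟩)
    · rw [mem_shiftDrop] at h2
      rcases h2 with ⟨h0, ⟨h3, _⟩ | ⟨_, h4⟩⟩
      · exact h3
      · omega
    · exact hq1
    · rw [mem_shiftDrop] at h2
      rcases h2 with ⟨h0, ⟨_, h3⟩ | ⟨h3, h4⟩⟩
      · omega
      · rw [show i - 1 + 1 = i from by omega] at h3
        exact h3
  · intro hi
    have hi1 : 1 ≤ i ∧ i ≤ n := hI i hi
    rcases Nat.lt_trichotomy i q with hlt | heq | hgt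
    · exact Or.inl ⟨hlt, by rw [mem_shiftDrop]; exact ⟨by omega, Or.inl ⟨hi, by omega⟩⟩⟩
    · exact absurd (heq ▸ hi) hqI
    · rcases Nat.eq_or_lt_of_le hgt with heq1 | hgt2
      · exact Or.inr (Or.inl ⟨hq, heq1.symm⟩)
      · refine Or.inr (Or.inr ⟨by omega, ?_⟩)
        rw [mem_shiftDrop]
        refine ⟨by omega, Or.inr ⟨by rw [show i - 1 + 1 = i from by omega]; exact hi, by omega⟩⟩

/-- Converse: `shiftFrom` case. -/
lemma key_from {n q : ℕ} {S I : Finset ℕ} (hq : q < n)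
    (hI : ∀ i ∈ I, 1 ≤ i ∧ i ≤ n) (hq1 : q + 1 ∈ I) (hqI : q ∉ I) (hq0 : 1 ≤ q)
    (hSeq : S = shiftFrom I (q + 1)) :
    ∀ i : ℕ, ((i < q ∧ i ∈ S) ∨ (q < n ∧ i = q + 1) ∨ (q + 2 ≤ i ∧ i - 1 ∈ S)) ↔ i ∈ I := by
  subst hSeq
  intro i
  constructor
  · rintro (⟨h1, h2⟩ | ⟨_, rfl⟩ | ⟨h1, h2⟩)
    · rw [mem_shiftFrom] at h2
      rcases h2 with ⟨h0, ⟨h3, _⟩ | ⟨_, h4⟩⟩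
      · exact h3
      · omega
    · exact hq1
    · rw [mem_shiftFrom] at h2
      rcases h2 with ⟨h0, ⟨_, h3⟩ | ⟨h3, h4⟩⟩
      · omega
      · rw [show i - 1 + 1 = i from by omega] at h3
        exact h3
  · intro hi
    have hi1 : 1 ≤ i ∧ i ≤ n := hI i hi
    rcases Nat.lt_trichotomy i q with hlt | heq | hgt
    · exact Or.inl ⟨hlt, by rw [mem_shiftFrom]; exact ⟨by omega, Or.inl ⟨hi, by omega⟩⟩⟩
    · exact absurd (heq ▸ hi) hqI
    · rcases Nat.eq_or_lt_of_le hgt with heq1 | hgt2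
      · exact Or.inr (Or.inl ⟨hq, heq1.symm⟩)
      · refine Or.inr (Or.inr ⟨by omega, ?_⟩)
        rw [mem_shiftFrom]
        refine ⟨by omega, Or.inr ⟨by rw [show i - 1 + 1 = i from by omega]; exact hi, by omega⟩⟩

lemma XDes_ins_last (hX : ∀ i ∈ Finset.Icc 1 n, (n + 1, i) ∈ X ∧ (i, n + 1) ∉ X)
    {w : List ℕ} (hlen : w.length = n) (hw : ∀ a ∈ w, 1 ≤ a ∧ a ≤ n) :
    XDes X (ins n (n + 1) w) = XDes X w := by
  ext i
  rw [mem_XDes_ins hX hlen hw le_rfl i]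
  constructor
  · rintro (⟨_, h⟩ | ⟨h, _⟩ | ⟨h1, h2⟩)
    · exact h
    · omega
    · have := (mem_XDes.1 h2).1
      rw [hlen] at this
      omega
  · intro h
    have := (mem_XDes.1 h).1
    rw [hlen] at this
    exact Or.inl ⟨by omega, h⟩

def PermsOf (S : Finset ℕ) : Finset (List ℕ) := (S.sort (·≤·)).permutations.toFinset

lemma mem_PermsOf {S : Finset ℕ} {w : List ℕ} :
    w ∈ PermsOf S ↔ w.Nodup ∧ w.toFinset = S := by
  rw [PermsOf, List.mem_toFinset, List.mem_permutations]
  constructor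
  · intro hp
    refine ⟨hp.symm.nodup (Finset.sort_nodup S _), ?_⟩
    rw [List.toFinset_eq_of_perm _ _ hp, Finset.sort_toFinset]
  · rintro ⟨h1, h2⟩
    exact List.perm_of_nodup_nodup_toFinset_eq h1 (Finset.sort_nodup S _)
      (by rw [h2, Finset.sort_toFinset])

lemma dX_eq_card (X : Set (ℕ × ℕ)) (I S : Finset ℕ) :
    dX X I S = ((PermsOf S).filter (fun w => XDes X w = I)).card := by
  classical
  have e : {w : List ℕ // w.Nodup ∧ w.toFinset = S ∧ XDes X w = I} ≃
      {w : List ℕ // w ∈ (PermsOf S).filter (fun w => XDes X w = I)} := by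
    refine Equiv.subtypeEquivRight fun w => ?_
    rw [Finset.mem_filter, mem_PermsOf]
    tauto
  rw [dX, Nat.card_congr e, Nat.card_eq_fintype_card, Fintype.card_coe]

lemma length_of_perm_mem {S : Finset ℕ} {w : List ℕ} (h : w ∈ PermsOf S) :
    w.length = S.card := by
  obtain ⟨h1, h2⟩ := mem_PermsOf.1 h
  rw [← List.toFinset_card_of_nodup h1, h2]

lemma Icc_insert (n : ℕ) : insert (n + 1) (Finset.Icc 1 n) = Finset.Icc 1 (n + 1) := by
  ext i
  simp only [Finset.mem_insert, Finset.mem_Icc]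
  omega

lemma member_facts {w : List ℕ} (hw : w ∈ PermsOf (Finset.Icc 1 n)) :
    w.Nodup ∧ w.toFinset = Finset.Icc 1 n ∧ w.length = n ∧ (∀ a ∈ w, 1 ≤ a ∧ a ≤ n)
      ∧ (n + 1) ∉ w := by
  obtain ⟨h1, h2⟩ := mem_PermsOf.1 hw
  have hlen : w.length = n := by
    have := length_of_perm_mem hw
    simpa using this
  have hmem : ∀ a ∈ w, 1 ≤ a ∧ a ≤ n := by
    intro a ha
    have : a ∈ w.toFinset := List.mem_toFinset.2 ha
    rw [h2, Finset.mem_Icc] at this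
    exact this
  refine ⟨h1, h2, hlen, hmem, fun hmem' => ?_⟩
  have := hmem _ hmem'
  omega

/-- The main bijection: permutations of `[n+1]` with descent set `I` correspond to pairs
`(q, w)` with `w` a permutation of `[n]` such that inserting `n+1` at position `q`
produces descent set `I`. -/
lemma card_step (I : Finset ℕ) :
    ((PermsOf (Finset.Icc 1 (n + 1))).filter (fun v => XDes X v = I)).card
      = ∑ q ∈ Finset.range (n + 1),
        ((PermsOf (Finset.Icc 1 n)).filter
          (fun w => XDes X (ins q (n + 1) w) = I)).card := by
  classical
  rw [← Finset.card_sigma]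
  refine Finset.card_bij'
    (fun v _ => ⟨v.idxOf (n + 1), v.eraseIdx (v.idxOf (n + 1))⟩)
    (fun p _ => ins p.1 (n + 1) p.2) ?_ ?_ ?_ ?_
  · -- forward membership
    intro v hv
    rw [Finset.mem_filter] at hv
    obtain ⟨hvP, hvD⟩ := hv
    obtain ⟨hnd, htf⟩ := mem_PermsOf.1 hvP
    have hlenv : v.length = n + 1 := by simpa using length_of_perm_mem hvP
    have hmemv : (n + 1) ∈ v := by
      rw [← List.mem_toFinset, htf, Finset.mem_Icc]; omega
    set q := v.idxOf (n + 1) with hqdef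
    have hqlt : q < n + 1 := hlenv ▸ List.idxOf_lt_length_iff.2 hmemv
    set w := v.eraseIdx q with hwdef
    have hrec : ins q (n + 1) w = v := ins_eraseIdx _ _ hmemv
    have hnodins := (nodup_ins q (n + 1) w).1 (hrec ▸ hnd)
    have hwtf : w.toFinset = Finset.Icc 1 n := by
      have h1 : insert (n + 1) w.toFinset = Finset.Icc 1 (n + 1) := by
        rw [← toFinset_ins q (n + 1) w, hrec, htf]
      have h2 : (n + 1) ∉ w.toFinset := fun h => hnodins.1 (List.mem_toFinset.1 h)
      rw [← Finset.erase_insert h2, h1]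
      ext i
      simp only [Finset.mem_erase, Finset.mem_Icc]
      omega
    rw [Finset.mem_sigma, Finset.mem_range, Finset.mem_filter, mem_PermsOf]
    exact ⟨hqlt, ⟨hnodins.2, hwtf⟩, by rw [hrec]; exact hvD⟩
  · -- backward membership
    rintro ⟨q, w⟩ hp
    rw [Finset.mem_sigma, Finset.mem_range, Finset.mem_filter] at hp
    obtain ⟨hq, hwP, hD⟩ := hp
    replace hq : q < n + 1 := hq
    replace hwP : w ∈ PermsOf (Finset.Icc 1 n) := hwP
    replace hD : XDes X (ins q (n + 1) w) = I := hD
    obtain ⟨hnd, htf, hlen, hmem, hnotmem⟩ := member_facts hwP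
    rw [Finset.mem_filter, mem_PermsOf]
    refine ⟨⟨(nodup_ins q (n + 1) w).2 ⟨hnotmem, hnd⟩, ?_⟩, hD⟩
    rw [toFinset_ins, htf, Icc_insert]
  · -- left inverse
    intro v hv
    rw [Finset.mem_filter] at hv
    obtain ⟨hvP, _⟩ := hv
    obtain ⟨_, htf⟩ := mem_PermsOf.1 hvP
    have hmemv : (n + 1) ∈ v := by
      rw [← List.mem_toFinset, htf, Finset.mem_Icc]; omega
    exact ins_eraseIdx _ _ hmemv
  · -- right inverse
    rintro ⟨q, w⟩ hp
    rw [Finset.mem_sigma, Finset.mem_range, Finset.mem_filter] at hp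
    obtain ⟨hq, hwP, _⟩ := hp
    replace hq : q < n + 1 := hq
    replace hwP : w ∈ PermsOf (Finset.Icc 1 n) := hwP
    obtain ⟨hnd, htf, hlen, hmem, hnotmem⟩ := member_facts hwP
    have hq' : q ≤ w.length := by omega
    have h1 : (ins q (n + 1) w).idxOf (n + 1) = q := indexOf_ins q (n + 1) w hq' hnotmem
    simp only [h1, eraseIdx_ins q (n + 1) w hq']

lemma Hq_last (hX : ∀ i ∈ Finset.Icc 1 n, (n + 1, i) ∈ X ∧ (i, n + 1) ∉ X) (I : Finset ℕ) :
    (PermsOf (Finset.Icc 1 n)).filter (fun w => XDes X (ins n (n + 1) w) = I)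
      = (PermsOf (Finset.Icc 1 n)).filter (fun w => XDes X w = I) := by
  classical
  apply Finset.filter_congr
  intro w hw
  obtain ⟨hnd, htf, hlen, hmem, hnotmem⟩ := member_facts hw
  rw [XDes_ins_last hX hlen hmem]

lemma Hq_lt (hn : 1 ≤ n) (hX : ∀ i ∈ Finset.Icc 1 n, (n + 1, i) ∈ X ∧ (i, n + 1) ∉ X)
    {I : Finset ℕ} (hI : ∀ i ∈ I, 1 ≤ i ∧ i ≤ n) {q : ℕ} (hq : q < n) :
    ((PermsOf (Finset.Icc 1 n)).filter (fun w => XDes X (ins q (n + 1) w) = I)).card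
      = if q + 1 ∈ I ∧ q ∉ I then
          (((PermsOf (Finset.Icc 1 n)).filter (fun w => XDes X w = shiftDrop I (q + 1))).card
            + if 1 ≤ q then
              ((PermsOf (Finset.Icc 1 n)).filter
                (fun w => XDes X w = shiftFrom I (q + 1))).card
              else 0)
        else 0 := by
  classical
  have hiff : ∀ w ∈ PermsOf (Finset.Icc 1 n),
      (XDes X (ins q (n + 1) w) = I ↔
        (q + 1 ∈ I ∧ q ∉ I ∧ (XDes X w = shiftDrop I (q + 1)
          ∨ (1 ≤ q ∧ XDes X w = shiftFrom I (q + 1))))) := by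
    intro w hw
    obtain ⟨hnd, htf, hlen, hmem, hnotmem⟩ := member_facts hw
    have hS : ∀ i ∈ XDes X w, 1 ≤ i ∧ i + 1 ≤ n := by
      intro i hi
      have h1 := (mem_XDes.1 hi).1
      rw [hlen] at h1
      omega
    constructor
    · intro he
      apply key_iff hq hS hI
      intro i
      exact (mem_XDes_ins hX hlen hmem hq.le i).symm.trans (by rw [he])
    · rintro ⟨h1, h2, h3 | ⟨h0, h3⟩⟩
      · ext i
        rw [mem_XDes_ins hX hlen hmem hq.le i]
        exact key_drop hq hI h1 h2 h3 i
      · ext i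
        rw [mem_XDes_ins hX hlen hmem hq.le i]
        exact key_from hq hI h1 h2 h0 h3 i
  rw [Finset.filter_congr hiff]
  by_cases hc : q + 1 ∈ I ∧ q ∉ I
  · rw [if_pos hc]
    have hsimp : (PermsOf (Finset.Icc 1 n)).filter
        (fun w => q + 1 ∈ I ∧ q ∉ I ∧ (XDes X w = shiftDrop I (q + 1)
          ∨ (1 ≤ q ∧ XDes X w = shiftFrom I (q + 1))))
        = (PermsOf (Finset.Icc 1 n)).filter
        (fun w => XDes X w = shiftDrop I (q + 1)
          ∨ (1 ≤ q ∧ XDes X w = shiftFrom I (q + 1))) := by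
      apply Finset.filter_congr
      intro w _
      simp only [hc.1, hc.2, true_and, not_false_iff]
    rw [hsimp]
    by_cases hq0 : 1 ≤ q
    · rw [if_pos hq0]
      have hsplit : (PermsOf (Finset.Icc 1 n)).filter
          (fun w => XDes X w = shiftDrop I (q + 1)
            ∨ (1 ≤ q ∧ XDes X w = shiftFrom I (q + 1)))
          = (PermsOf (Finset.Icc 1 n)).filter (fun w => XDes X w = shiftDrop I (q + 1))
            ∪ (PermsOf (Finset.Icc 1 n)).filter (fun w => XDes X w = shiftFrom I (q + 1)) := by
        ext w
        simp only [Finset.mem_union, Finset.mem_filter]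
        constructor
        · rintro ⟨hw, h | ⟨_, h⟩⟩
          · exact Or.inl ⟨hw, h⟩
          · exact Or.inr ⟨hw, h⟩
        · rintro (⟨hw, h⟩ | ⟨hw, h⟩)
          · exact ⟨hw, Or.inl h⟩
          · exact ⟨hw, Or.inr ⟨hq0, h⟩⟩
      rw [hsplit]
      apply Finset.card_union_of_disjoint
      rw [Finset.disjoint_left]
      intro w hw1 hw2
      rw [Finset.mem_filter] at hw1 hw2
      have hne : shiftDrop I (q + 1) = shiftFrom I (q + 1) := hw1.2 ▸ hw2.2
      have hmemF : q ∈ shiftFrom I (q + 1) :=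
        mem_shiftFrom.2 ⟨by omega, Or.inr ⟨hc.1, by omega⟩⟩
      have hmemD : q ∉ shiftDrop I (q + 1) := by
        intro hmem
        rcases mem_shiftDrop.1 hmem with ⟨_, ⟨hI1, _⟩ | ⟨_, h⟩⟩
        · exact hc.2 hI1
        · omega
      rw [hne] at hmemD
      exact hmemD hmemF
    · rw [if_neg hq0]
      have he : (PermsOf (Finset.Icc 1 n)).filter
          (fun w => XDes X w = shiftDrop I (q + 1)
            ∨ (1 ≤ q ∧ XDes X w = shiftFrom I (q + 1)))
          = (PermsOf (Finset.Icc 1 n)).filter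
            (fun w => XDes X w = shiftDrop I (q + 1)) := by
        apply Finset.filter_congr
        intro w _
        constructor
        · rintro (h | ⟨h, _⟩)
          · exact h
          · omega
        · exact fun h => Or.inl h
      rw [he]
      omega
  · rw [if_neg hc]
    rw [Finset.card_eq_zero, Finset.filter_eq_empty_iff]
    intro w _
    intro hcon
    exact hc ⟨hcon.1, hcon.2.1⟩

noncomputable def GD (X : Set (ℕ × ℕ)) (n : ℕ) (I : Finset ℕ) (m : ℕ) : ℕ :=
  ((PermsOf (Finset.Icc 1 n)).filter (fun w => XDes X w = shiftDrop I m)).card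

noncomputable def GF (X : Set (ℕ × ℕ)) (n : ℕ) (I : Finset ℕ) (m : ℕ) : ℕ :=
  ((PermsOf (Finset.Icc 1 n)).filter (fun w => XDes X w = shiftFrom I m)).card

lemma dXn_drop (X : Set (ℕ × ℕ)) (n : ℕ) (I : Finset ℕ) (m : ℕ) :
    dXn X (shiftDrop I m) n = GD X n I m := by
  rw [dXn, dX_eq_card, GD]

lemma dXn_from (X : Set (ℕ × ℕ)) (n : ℕ) (I : Finset ℕ) (m : ℕ) :
    dXn X (shiftFrom I m) n = GF X n I m := by
  rw [dXn, dX_eq_card, GF]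

end Stmt4Aux


open Stmt4Aux in
/-- insertion recursion. Fix `n ≥ 1` and assume `(n+1,i) ∈ X` and
`(i,n+1) ∉ X` for every `i ∈ [n]`. For `I = {i₁ < ⋯ < i_ℓ} ⊆ [n]`, with
`I' = {i_k ∈ I : i_k − 1 ∉ I}` and `I'' = I' \ {1}`:
`d_X(I;n+1) = d_X(I;n) + Σ_{i_k ∈ I''} d_X(I_k;n) + Σ_{i_k ∈ I'} d_X(Î_k;n)`. -/
theorem stmt4 (n : ℕ) (hn : 1 ≤ n) (X : Set (ℕ × ℕ))
    (hX : ∀ i ∈ Finset.Icc 1 n, (n + 1, i) ∈ X ∧ (i, n + 1) ∉ X)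
    (I : Finset ℕ) (hI : I ⊆ Finset.Icc 1 n) :
    dXn X I (n + 1) =
      dXn X I n
      + (∑ m ∈ (I.filter (fun i => i - 1 ∉ I)).erase 1, dXn X (shiftFrom I m) n)
      + (∑ m ∈ I.filter (fun i => i - 1 ∉ I), dXn X (shiftDrop I m) n) := by
  classical
  have hI' : ∀ i ∈ I, 1 ≤ i ∧ i ≤ n := fun i hi => Finset.mem_Icc.1 (hI hi)
  have hcard : dXn X I n
      = ((PermsOf (Finset.Icc 1 n)).filter (fun w => XDes X w = I)).card := by
    rw [dXn, dX_eq_card]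
  have hsum : (∑ q ∈ Finset.range n, ((PermsOf (Finset.Icc 1 n)).filter
        (fun w => XDes X (ins q (n + 1) w) = I)).card)
      = ∑ q ∈ Finset.range n, ((if q + 1 ∈ I ∧ q ∉ I then GD X n I (q + 1) else 0)
          + (if (q + 1 ∈ I ∧ q ∉ I) ∧ 1 ≤ q then GF X n I (q + 1) else 0)) := by
    apply Finset.sum_congr rfl
    intro q hq
    rw [Finset.mem_range] at hq
    rw [Hq_lt hn hX hI' hq]
    by_cases hc : q + 1 ∈ I ∧ q ∉ I
    · rw [if_pos hc, if_pos hc]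
      by_cases hq0 : 1 ≤ q
      · rw [if_pos hq0, if_pos ⟨hc, hq0⟩]; rfl
      · rw [if_neg hq0, if_neg (fun h => hq0 h.2)]; rfl
    · rw [if_neg hc, if_neg hc, if_neg (fun h => hc h.1)]
  have hA : (∑ q ∈ Finset.range n, if q + 1 ∈ I ∧ q ∉ I then GD X n I (q + 1) else 0)
      = ∑ m ∈ I.filter (fun i => i - 1 ∉ I), dXn X (shiftDrop I m) n := by
    have e1 : (∑ q ∈ Finset.range n, if q + 1 ∈ I ∧ q ∉ I then GD X n I (q + 1) else 0)
        = ∑ m ∈ Finset.Icc 1 n, if m ∈ I ∧ m - 1 ∉ I then GD X n I m else 0 := by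
      refine Finset.sum_nbij' (i := fun q => q + 1) (j := fun m => m - 1) ?_ ?_ ?_ ?_ ?_
      · intro a ha; rw [Finset.mem_range] at ha; rw [Finset.mem_Icc]; omega
      · intro a ha; rw [Finset.mem_Icc] at ha; rw [Finset.mem_range]; omega
      · intro a _; omega
      · intro a ha; rw [Finset.mem_Icc] at ha; omega
      · intro a _; simp only [Nat.add_sub_cancel]
    rw [e1, ← Finset.sum_filter]
    have e2 : (Finset.Icc 1 n).filter (fun m => m ∈ I ∧ m - 1 ∉ I)
        = I.filter (fun i => i - 1 ∉ I) := by
      ext m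
      simp only [Finset.mem_filter, Finset.mem_Icc]
      constructor
      · rintro ⟨_, h2, h3⟩; exact ⟨h2, h3⟩
      · rintro ⟨h2, h3⟩; exact ⟨hI' m h2, h2, h3⟩
    rw [e2]
    exact Finset.sum_congr rfl fun m _ => (dXn_drop X n I m).symm
  have hB : (∑ q ∈ Finset.range n,
        if (q + 1 ∈ I ∧ q ∉ I) ∧ 1 ≤ q then GF X n I (q + 1) else 0)
      = ∑ m ∈ (I.filter (fun i => i - 1 ∉ I)).erase 1, dXn X (shiftFrom I m) n := by
    have e1 : (∑ q ∈ Finset.range n,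
          if (q + 1 ∈ I ∧ q ∉ I) ∧ 1 ≤ q then GF X n I (q + 1) else 0)
        = ∑ m ∈ Finset.Icc 1 n,
            if (m ∈ I ∧ m - 1 ∉ I) ∧ 2 ≤ m then GF X n I m else 0 := by
      refine Finset.sum_nbij' (i := fun q => q + 1) (j := fun m => m - 1) ?_ ?_ ?_ ?_ ?_
      · intro a ha; rw [Finset.mem_range] at ha; rw [Finset.mem_Icc]; omega
      · intro a ha; rw [Finset.mem_Icc] at ha; rw [Finset.mem_range]; omega
      · intro a _; omega
      · intro a ha; rw [Finset.mem_Icc] at ha; omega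
      · intro a _
        simp only [Nat.add_sub_cancel]
        refine if_congr ?_ rfl rfl
        constructor
        · rintro ⟨h1, h2⟩; exact ⟨h1, by omega⟩
        · rintro ⟨h1, h2⟩; exact ⟨h1, by omega⟩
    rw [e1, ← Finset.sum_filter]
    have e2 : (Finset.Icc 1 n).filter (fun m => (m ∈ I ∧ m - 1 ∉ I) ∧ 2 ≤ m)
        = (I.filter (fun i => i - 1 ∉ I)).erase 1 := by
      ext m
      simp only [Finset.mem_filter, Finset.mem_Icc, Finset.mem_erase]
      constructor
      · rintro ⟨_, ⟨h2, h3⟩, h4⟩; exact ⟨by omega, h2, h3⟩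
      · rintro ⟨h1, h2, h3⟩
        have := hI' m h2
        exact ⟨this, ⟨h2, h3⟩, by omega⟩
    rw [e2]
    exact Finset.sum_congr rfl fun m _ => (dXn_from X n I m).symm
  rw [dXn, dX_eq_card, card_step, Finset.sum_range_succ, Hq_last hX, hsum,
    Finset.sum_add_distrib, hA, hB, hcard]
  omega
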